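/- Let X be a group, G ≤ X a subgroup, H ≤ G, and K a normal subgroup of H with K = T ∩ H for some subgroup T ≤ X. If J := ⋂_{g ∈ H} T^g, then H ∩ J = K, H ≤ N_X(J), and H/K is isomorphic to the subgroup HJ/J of N_X(J)/J. -/

import Mathlib

/-- conjugate `T^g = g⁻¹ T g` of a subgroup. -/
def conjSubgroup {X : Type*} [Group X] (T : Subgroup X) (g : X) : Subgroup X :=
  Subgroup.map (MulAut.conj g⁻¹).toMonoidHom T

lemma mem_conjSubgroup {X : Type*} [Group X] {T : Subgroup X} {g x : X} :
    x ∈ conjSubgroup T g ↔ g * x * g⁻¹ ∈ T := by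
  constructor
  · rintro ⟨t, ht, rfl⟩
    simpa [MulAut.conj_apply, mul_assoc] using ht
  · intro h
    exact ⟨g * x * g⁻¹, h, by simp [MulAut.conj_apply]; group⟩

/-- If `K = T ∩ H` is normal in `H ≤ G ≤ X` and `J = ⋂_{g ∈ H} T^g`, then
`H ∩ J = K`, `H ≤ N_X(J)`, and `H/K` is isomorphic to the subgroup `HJ/J` of
`N_X(J)/J` (the image of `H` in `N_X(J)/J`). -/
theorem stmt_8 {X : Type*} [Group X] (G H K T : Subgroup X) (hHG : H ≤ G)
    (hKH : K ≤ H) (hKnorm : (K.subgroupOf H).Normal) (hKT : K = T ⊓ H)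
    (J : Subgroup X) (hJ : J = ⨅ g ∈ H, conjSubgroup T g) :
    H ⊓ J = K ∧ H ≤ Subgroup.normalizer (J : Set X) ∧
    Nonempty ((H ⧸ K.subgroupOf H) ≃*
      Subgroup.map (QuotientGroup.mk' (J.subgroupOf (Subgroup.normalizer (J : Set X))))
        (H.subgroupOf (Subgroup.normalizer (J : Set X)))) := by
  have hmemJ : ∀ x, x ∈ J ↔ ∀ g ∈ H, g * x * g⁻¹ ∈ T := by
    intro x
    simp [hJ, Subgroup.mem_iInf, mem_conjSubgroup]
  have h1 : H ⊓ J = K := by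
    apply le_antisymm
    · rintro x ⟨hxH, hxJ⟩
      have := (hmemJ x).mp hxJ 1 (one_mem H)
      simp at this
      rw [hKT]
      exact ⟨this, hxH⟩
    · refine le_inf hKH ?_
      intro k hk
      rw [hmemJ]
      intro g hg
      have : (⟨g, hg⟩ : H) * ⟨k, hKH hk⟩ * (⟨g, hg⟩ : H)⁻¹ ∈ K.subgroupOf H :=
        hKnorm.conj_mem ⟨k, hKH hk⟩ hk ⟨g, hg⟩
      have hK' : g * k * g⁻¹ ∈ K := this
      exact (hKT ▸ hK' : g * k * g⁻¹ ∈ T ⊓ H).1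
  have h2 : H ≤ Subgroup.normalizer (J : Set X) := by
    intro h hh
    rw [Subgroup.mem_normalizer_iff]
    intro x
    constructor
    · intro hx
      rw [hmemJ]
      intro g hg
      have := (hmemJ x).mp hx (g * h) (H.mul_mem hg hh)
      simpa [mul_assoc] using this
    · intro hx
      rw [hmemJ]
      intro g hg
      have := (hmemJ _).mp hx (g * h⁻¹) (H.mul_mem hg (H.inv_mem hh))
      simpa [mul_assoc] using this
  refine ⟨h1, h2, ?_⟩
  set N := Subgroup.normalizer (J : Set X)
  set f : H →* N ⧸ J.subgroupOf N :=
    (QuotientGroup.mk' (J.subgroupOf N)).comp (Subgroup.inclusion h2) with hf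
  have hker : f.ker = K.subgroupOf H := by
    ext ⟨x, hx⟩
    simp only [MonoidHom.mem_ker, hf, MonoidHom.comp_apply, QuotientGroup.mk'_apply,
      QuotientGroup.eq_one_iff]
    have : (Subgroup.inclusion h2 ⟨x, hx⟩ : X) = x := rfl
    rw [Subgroup.mem_subgroupOf, this, Subgroup.mem_subgroupOf]
    change x ∈ J ↔ x ∈ K
    rw [← h1]
    exact ⟨fun h => ⟨hx, h⟩, fun h => h.2⟩
  have hrange : f.range = Subgroup.map (QuotientGroup.mk' (J.subgroupOf N))
      (H.subgroupOf N) := by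
    rw [hf, MonoidHom.range_comp, Subgroup.inclusion_range]
  exact ⟨(QuotientGroup.quotientMulEquivOfEq hker.symm).trans
    ((QuotientGroup.quotientKerEquivRange f).trans (MulEquiv.subgroupCongr hrange))⟩
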